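/- For every T > 0 and every t ∈ [0, T], |sinh(T − t) − sinh T + sinh t| / (T sinh T − 2(cosh T − 1)) ≤ 3 / (2T). (The turnpike factor in the optimal velocity trajectory of the double integrator is uniformly bounded by (3/2)/T on [0, T].) -/

import Mathlib

open Real

private lemma sinh_lt_mul_cosh {x : ℝ} (hx : 0 < x) : sinh x < x * cosh x := by
  have h : StrictMonoOn (fun y : ℝ => y * cosh y - sinh y) (Set.Ici 0) := by
    apply strictMonoOn_of_deriv_pos (convex_Ici 0)
    · exact (continuous_id.mul Real.continuous_cosh).sub Real.continuous_sinh |>.continuousOn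
    · intro y hy
      rw [interior_Ici] at hy
      have hd : HasDerivAt (fun y : ℝ => y * cosh y - sinh y) (y * sinh y) y := by
        have := ((hasDerivAt_id y).mul (Real.hasDerivAt_cosh y)).sub (Real.hasDerivAt_sinh y)
        exact this.congr_deriv (by simp only [id_eq]; ring)
      rw [hd.deriv]
      exact mul_pos hy (Real.sinh_pos_iff.mpr hy)
  have := h (Set.self_mem_Ici) (Set.mem_Ici.mpr hx.le) hx
  simp at this
  linarith

private lemma two_cosh_le {x : ℝ} (hx : 0 ≤ x) : 2 * cosh x ≤ x * sinh x + 2 := by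
  have h : MonotoneOn (fun y : ℝ => y * sinh y + 2 - 2 * cosh y) (Set.Ici 0) := by
    apply monotoneOn_of_deriv_nonneg (convex_Ici 0)
    · exact (((continuous_id.mul Real.continuous_sinh).add continuous_const).sub
        (continuous_const.mul Real.continuous_cosh)).continuousOn
    · exact (((differentiable_id.mul Real.differentiable_sinh).add_const 2).sub
        (Real.differentiable_cosh.const_mul 2)).differentiableOn
    · intro y hy
      rw [interior_Ici] at hy
      have hd : HasDerivAt (fun y : ℝ => y * sinh y + 2 - 2 * cosh y)
          (y * cosh y - sinh y) y := by
        have := (((hasDerivAt_id y).mul (Real.hasDerivAt_sinh y)).add_const 2).sub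
          ((Real.hasDerivAt_cosh y).const_mul 2)
        exact this.congr_deriv (by simp only [id_eq]; ring)
      rw [hd.deriv]
      linarith [sinh_lt_mul_cosh hy]
  have := h (Set.self_mem_Ici) (Set.mem_Ici.mpr hx) hx
  simp [Real.cosh_zero] at this
  linarith

private lemma three_sinh_le {x : ℝ} (hx : 0 ≤ x) : 3 * sinh x ≤ x * cosh x + 2 * x := by
  have h : MonotoneOn (fun y : ℝ => y * cosh y + 2 * y - 3 * sinh y) (Set.Ici 0) := by
    apply monotoneOn_of_deriv_nonneg (convex_Ici 0)
    · exact (((continuous_id.mul Real.continuous_cosh).add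
        (continuous_const.mul continuous_id)).sub
        (continuous_const.mul Real.continuous_sinh)).continuousOn
    · exact (((differentiable_id.mul Real.differentiable_cosh).add
        (differentiable_id.const_mul 2)).sub
        (Real.differentiable_sinh.const_mul 3)).differentiableOn
    · intro y hy
      rw [interior_Ici] at hy
      have hd : HasDerivAt (fun y : ℝ => y * cosh y + 2 * y - 3 * sinh y)
          (y * sinh y + 2 - 2 * cosh y) y := by
        have := (((hasDerivAt_id y).mul (Real.hasDerivAt_cosh y)).add
          ((hasDerivAt_id y).const_mul 2)).sub ((Real.hasDerivAt_sinh y).const_mul 3)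
        exact this.congr_deriv (by simp only [id_eq]; ring)
      rw [hd.deriv]
      linarith [two_cosh_le hy.le]
  have := h (Set.self_mem_Ici) (Set.mem_Ici.mpr hx) hx
  simp [Real.sinh_zero] at this
  linarith

/-- the turnpike factor in the optimal velocity trajectory of the
double integrator is uniformly bounded by `(3/2)/T` on `[0, T]`. -/
theorem turnpike_factor_bound :
    ∀ T : ℝ, 0 < T → ∀ t ∈ Set.Icc (0 : ℝ) T,
      |sinh (T - t) - sinh T + sinh t| / (T * sinh T - 2 * (cosh T - 1)) ≤
        3 / (2 * T) := by
  intro T hT t ht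
  obtain ⟨ht0, htT⟩ := ht
  have hx0 : 0 < T / 2 := by positivity
  have hs0 : 0 < sinh (T / 2) := Real.sinh_pos_iff.mpr hx0
  have hc1 : 1 ≤ cosh (T / 2) := Real.one_le_cosh _
  -- identities
  have hsinhT : sinh T = 2 * sinh (T / 2) * cosh (T / 2) := by
    rw [show T = 2 * (T / 2) by ring, Real.sinh_two_mul]
    ring_nf
  have hcoshT : cosh T = cosh (T / 2) ^ 2 + sinh (T / 2) ^ 2 := by
    rw [show T = 2 * (T / 2) by ring, Real.cosh_two_mul]
    ring_nf
  have hcs : cosh (T / 2) ^ 2 = sinh (T / 2) ^ 2 + 1 := Real.cosh_sq _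
  -- rewrite numerator
  have e1 : sinh (T / 2 + (T / 2 - t)) =
      sinh (T / 2) * cosh (T / 2 - t) + cosh (T / 2) * sinh (T / 2 - t) :=
    Real.sinh_add _ _
  have e2 : sinh (T / 2 - (T / 2 - t)) =
      sinh (T / 2) * cosh (T / 2 - t) - cosh (T / 2) * sinh (T / 2 - t) :=
    Real.sinh_sub _ _
  have hnum : sinh (T - t) + sinh t = 2 * sinh (T / 2) * cosh (T / 2 - t) := by
    rw [show T - t = T / 2 + (T / 2 - t) by ring, e1,
      show t = T / 2 - (T / 2 - t) by ring, e2]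
    ring
  have hcb : cosh (T / 2 - t) ≤ cosh (T / 2) := by
    rw [Real.cosh_le_cosh, abs_le, abs_of_pos hx0]
    constructor <;> linarith
  have hcb1 : 1 ≤ cosh (T / 2 - t) := Real.one_le_cosh _
  -- bound on |N|
  have habs : |sinh (T - t) - sinh T + sinh t| ≤ 2 * sinh (T / 2) * (cosh (T / 2) - 1) := by
    have heq : sinh (T - t) - sinh T + sinh t =
        2 * sinh (T / 2) * (cosh (T / 2 - t) - cosh (T / 2)) := by
      rw [show sinh (T - t) - sinh T + sinh t = (sinh (T - t) + sinh t) - sinh T by ring,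
        hnum, hsinhT]
      ring
    rw [heq, abs_of_nonpos (by nlinarith)]
    nlinarith
  -- denominator
  have hden : T * sinh T - 2 * (cosh T - 1) =
      2 * T * sinh (T / 2) * cosh (T / 2) - 4 * sinh (T / 2) ^ 2 := by
    rw [hsinhT, hcoshT, hcs]; ring
  have hkey : 3 * sinh (T / 2) ≤ T / 2 * cosh (T / 2) + 2 * (T / 2) := three_sinh_le hx0.le
  have hDpos : 0 < T * sinh T - 2 * (cosh T - 1) := by
    rw [hden]
    have := sinh_lt_mul_cosh hx0
    nlinarith
  rw [div_le_div_iff₀ hDpos (by positivity)]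
  calc |sinh (T - t) - sinh T + sinh t| * (2 * T)
      ≤ 2 * sinh (T / 2) * (cosh (T / 2) - 1) * (2 * T) :=
        mul_le_mul_of_nonneg_right habs (by positivity)
    _ ≤ 3 * (T * sinh T - 2 * (cosh T - 1)) := by
        rw [hden]
        nlinarith [mul_le_mul_of_nonneg_left hkey
          (by positivity : (0:ℝ) ≤ 4 * sinh (T / 2))]
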